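/- Let d be a strong b-metric on X with constant s ≥ 1. Then d satisfies the s-relaxed polygonal inequality: d(x₀,xₙ) ≤ s(d(x₀,x₁) + d(x₁,x₂) + ⋯ + d(x_{n−1},xₙ)) for all n ∈ ℕ and all x₀, x₁, …, xₙ ∈ X. -/
import Mathlib

lemma strong_bmetric_aux {X : Type*}
    (d : X → X → ℝ) (s : ℝ)
    (htri : ∀ x y z, d x y ≤ d x z + s * d z y)
    (n : ℕ) (hn : 1 ≤ n) (x : ℕ → X) :
    d (x 0) (x n) ≤ d (x 0) (x 1) + s * ∑ i ∈ Finset.Ico 1 n, d (x i) (x (i + 1)) := by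
  induction n, hn using Nat.le_induction with
  | base => simp
  | succ n hn ih =>
    calc d (x 0) (x (n + 1)) ≤ d (x 0) (x n) + s * d (x n) (x (n + 1)) := htri _ _ _
      _ ≤ (d (x 0) (x 1) + s * ∑ i ∈ Finset.Ico 1 n, d (x i) (x (i + 1)))
            + s * d (x n) (x (n + 1)) := by linarith
      _ = d (x 0) (x 1) + s * ∑ i ∈ Finset.Ico 1 (n + 1), d (x i) (x (i + 1)) := by
          rw [Finset.sum_Ico_succ_top hn]; ring

/-- A strong b-metric with constant `s` satisfies the `s`-relaxed polygonal
inequality. -/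
theorem strong_bmetric_relaxed_polygonal {X : Type*}
    (d : X → X → ℝ) (s : ℝ) (hs : 1 ≤ s)
    (hnonneg : ∀ x y, 0 ≤ d x y)
    (heq : ∀ x y, d x y = 0 ↔ x = y)
    (hsymm : ∀ x y, d x y = d y x)
    (htri : ∀ x y z, d x y ≤ d x z + s * d z y)
    (n : ℕ) (hn : 1 ≤ n) (x : ℕ → X) :
    d (x 0) (x n) ≤ s * ∑ i ∈ Finset.range n, d (x i) (x (i + 1)) := by
  have h := strong_bmetric_aux d s htri n hn x
  have hsplit : ∑ i ∈ Finset.range n, d (x i) (x (i + 1))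
      = d (x 0) (x 1) + ∑ i ∈ Finset.Ico 1 n, d (x i) (x (i + 1)) := by
    rw [Finset.range_eq_Ico, Finset.sum_eq_sum_Ico_succ_bot hn]
  rw [hsplit]
  nlinarith [hnonneg (x 0) (x 1), Finset.sum_nonneg
    (fun i _ => hnonneg (x i) (x (i + 1))) (s := Finset.Ico 1 n)]
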